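/- Let m be a positive integer and i an integer with gcd(i,m) = gcd(i+2,m) = 1, and let S be the numerical semigroup generated by m together with the numbers −⌊ℓi/m⌋·m + ℓ(i+2) for 1 ≤ ℓ ≤ m−1. Then every positive divisor d of m with d < m does not belong to S. -/

import Mathlib

theorem stmt_2 (m i : ℤ) (hm : 0 < m)
    (h1 : Int.gcd i m = 1) (h2 : Int.gcd (i + 2) m = 1) :
    ∀ d : ℤ, 0 < d → d ∣ m → d < m →
      d ∉ AddSubmonoid.closure
        ({m} ∪ {x : ℤ | ∃ ℓ : ℤ, 1 ≤ ℓ ∧ ℓ ≤ m - 1 ∧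
          x = -⌊((ℓ : ℚ) * (i : ℚ)) / (m : ℚ)⌋ * m + ℓ * (i + 2)}) := by
  intro d hd0 hdm hdlt hmem
  have hm0 : m ≠ 0 := hm.ne'
  -- inverse of i+2 mod m
  obtain ⟨j, v, hjv⟩ : ∃ j v, (i + 2) * j + m * v = 1 := by
    obtain ⟨a, b, hab⟩ := Int.isCoprime_iff_gcd_eq_one.mpr h2
    exact ⟨a, b, by linarith⟩
  set F : ℤ → ℤ := fun x => 2 * (x * j % m) + (x * j * i % m) with hF
  have hmodeq : ∀ a b : ℤ, m ∣ a - b → a % m = b % m := by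
    intro a b h
    have := Int.ModEq.symm (Int.modEq_iff_dvd.mpr h)
    exact this
  -- subadditivity of emod
  have hmodle : ∀ a b : ℤ, (a + b) % m ≤ a % m + b % m := by
    intro a b
    rw [Int.add_emod]
    have h1 : 0 ≤ a % m + b % m := by
      have := Int.emod_nonneg a hm0
      have := Int.emod_nonneg b hm0
      omega
    calc (a % m + b % m) % m
        = (a % m + b % m) - m * ((a % m + b % m) / m) := by rw [Int.emod_def]
      _ ≤ a % m + b % m := by
          have : 0 ≤ (a % m + b % m) / m := Int.ediv_nonneg h1 hm.le
          nlinarith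
  have hFsub : ∀ a b : ℤ, F (a + b) ≤ F a + F b := by
    intro a b
    simp only [hF, add_mul]
    have := hmodle (a * j) (b * j)
    have := hmodle (a * j * i) (b * j * i)
    omega
  -- every element of the closure dominates F
  have key : ∀ x ∈ AddSubmonoid.closure
        ({m} ∪ {x : ℤ | ∃ ℓ : ℤ, 1 ≤ ℓ ∧ ℓ ≤ m - 1 ∧
          x = -⌊((ℓ : ℚ) * (i : ℚ)) / (m : ℚ)⌋ * m + ℓ * (i + 2)}), F x ≤ x := by
    intro x hx
    induction hx using AddSubmonoid.closure_induction with
    | mem x hxs =>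
        rcases hxs with hxm | ⟨ℓ, hℓ1, hℓ2, hxe⟩
        · -- x = m
          have hxm' : x = m := hxm
          rw [hxm']
          have : F m = 0 := by
            simp only [hF]
            rw [Int.mul_emod_right, mul_assoc, Int.mul_emod_right]
            norm_num
          omega
        · -- generator
          have hmn : (m.toNat : ℤ) = m := Int.toNat_of_nonneg hm.le
          have hfl : ⌊((ℓ : ℚ) * (i : ℚ)) / (m : ℚ)⌋ = (ℓ * i) / m := by
            have h := Rat.floor_intCast_div_natCast (ℓ * i) m.toNat
            rw [show ((m.toNat : ℕ) : ℚ) = (m : ℚ) by exact_mod_cast congrArg (Int.cast : ℤ → ℚ) hmn] at h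
            rw [show ((ℓ * i : ℤ) : ℚ) = (ℓ : ℚ) * (i : ℚ) by push_cast; ring] at h
            rw [h, hmn]
          have hxval : x = 2 * ℓ + (ℓ * i) % m := by
            rw [hxe, hfl, Int.emod_def]; ring
          have hdvd : m ∣ x * j - ℓ :=
            ⟨-(⌊((ℓ : ℚ) * (i : ℚ)) / (m : ℚ)⌋ * j) - ℓ * v, by
              rw [hxe]; linear_combination ℓ * hjv⟩
          have hxjmod : x * j % m = ℓ % m := hmodeq _ _ hdvd
          have hℓmod : ℓ % m = ℓ := Int.emod_eq_of_lt (by omega) (by omega)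
          have hxji : x * j * i % m = ℓ * i % m := by
            obtain ⟨c, hc⟩ := hdvd
            exact hmodeq _ _ ⟨c * i, by linear_combination i * hc⟩
          have : F x = 2 * ℓ + ℓ * i % m := by
            simp only [hF, hxjmod, hℓmod, hxji]
          omega
    | zero => simp [hF]
    | add x y hx hy ihx ihy =>
        calc F (x + y) ≤ F x + F y := hFsub x y
          _ ≤ x + y := by omega
  have hFd : F d ≤ d := key d hmem
  -- now derive a contradiction
  set ℓ := d * j % m with hℓ
  have hℓ0 : 0 ≤ ℓ := Int.emod_nonneg _ hm0
  have hℓm : ℓ < m := Int.emod_lt_of_pos _ hm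
  have hjm : IsCoprime j m := ⟨i + 2, v, by linarith⟩
  have hℓne : ℓ ≠ 0 := by
    intro h0
    have hdj : m ∣ d * j := Int.dvd_of_emod_eq_zero (by rw [← hℓ]; exact h0)
    have : m ∣ d := hjm.symm.dvd_of_dvd_mul_right hdj
    have := Int.le_of_dvd hd0 this
    omega
  have hℓ1 : 1 ≤ ℓ := by omega
  have hdjℓ : m ∣ d * j - ℓ := ⟨d * j / m, by rw [hℓ, Int.emod_def]; ring⟩
  have hFdval : F d = 2 * ℓ + ℓ * i % m := by
    obtain ⟨c, hc⟩ := hdjℓ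
    have hxji : d * j * i % m = ℓ * i % m :=
      hmodeq _ _ ⟨c * i, by linear_combination i * hc⟩
    simp only [hF, ← hℓ, hxji]
  -- ℓ*i % m ≥ 1
  have him : IsCoprime i m := Int.isCoprime_iff_gcd_eq_one.mpr h1
  have hr1 : 1 ≤ ℓ * i % m := by
    have hne : ℓ * i % m ≠ 0 := by
      intro h0
      have : m ∣ ℓ * i := Int.dvd_of_emod_eq_zero h0
      have : m ∣ ℓ := him.symm.dvd_of_dvd_mul_right this
      have := Int.le_of_dvd (by omega) this
      omega
    have := Int.emod_nonneg (ℓ * i) hm0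
    omega
  -- F d ≡ d mod m
  have h1' : m ∣ (2 * ℓ + ℓ * i % m) - ℓ * (i + 2) := by
    have : m ∣ ℓ * i % m - ℓ * i := ⟨-(ℓ * i / m), by rw [Int.emod_def]; ring⟩
    obtain ⟨c, hc⟩ := this
    exact ⟨c, by linarith⟩
  have hcong : m ∣ F d - d := by
    obtain ⟨c, hc⟩ := hdjℓ
    have h2' : m ∣ ℓ * (i + 2) - d * j * (i + 2) :=
      ⟨-(c * (i + 2)), by linear_combination -(i + 2) * hc⟩
    have h3' : m ∣ d * j * (i + 2) - d := ⟨-(d * v), by linear_combination d * hjv⟩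
    have heq : F d - d = ((2 * ℓ + ℓ * i % m) - ℓ * (i + 2)) +
        ((ℓ * (i + 2) - d * j * (i + 2)) + (d * j * (i + 2) - d)) := by
      rw [hFdval]; ring
    rw [heq]
    exact dvd_add h1' (dvd_add h2' h3')
  -- F d ≠ d
  have hne : F d ≠ d := by
    intro heq
    have h2' : d ∣ 2 * ℓ + ℓ * i % m := by rw [← hFdval, heq]
    have h1'' : d ∣ (2 * ℓ + ℓ * i % m) - ℓ * (i + 2) := dvd_trans hdm h1'
    have hd_dvd : d ∣ ℓ * (i + 2) := by
      have := dvd_sub h2' h1''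
      simpa using this
    have hco : IsCoprime (i + 2) d :=
      (Int.isCoprime_iff_gcd_eq_one.mpr h2).of_isCoprime_of_dvd_right hdm
    have hdl : d ∣ ℓ := hco.symm.dvd_of_dvd_mul_right hd_dvd
    have : d ≤ ℓ := Int.le_of_dvd (by omega) hdl
    omega
  obtain ⟨k, hk⟩ := hcong
  have hFd3 : 3 ≤ F d := by rw [hFdval]; omega
  rcases lt_trichotomy k 0 with hk0 | hk0 | hk0
  · have : m * k ≤ m * (-1) := mul_le_mul_of_nonneg_left (by omega) hm.le
    linarith
  · subst hk0
    simp only [mul_zero] at hk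
    exact hne (by omega)
  · have : m * 1 ≤ m * k := mul_le_mul_of_nonneg_left (by omega) hm.le
    linarith
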